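/- For every d ∈ (0, 1/2), lim_{n→∞} n^{−1−2d} ∫_{−π}^{π} D_n²(x) · |1−e^{−ix}|^{−2d} dx = ∫_ℝ |1−e^{−ix}|² · |x|^{−2−2d} dx, and the integral on the right-hand side is finite. -/

import Mathlib

open MeasureTheory Filter Set

/-- Squared Dirichlet-type kernel `D_n²(x) = |Σ_{t=1}^n e^{itx}|²`. -/
noncomputable def Dsq (n : ℕ) (x : ℝ) : ℝ :=
  ‖∑ t ∈ Finset.Icc 1 n, Complex.exp (Complex.I * (t : ℂ) * (x : ℂ))‖ ^ 2

/- ### Auxiliary material -/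

noncomputable def dflS (x : ℝ) : ℝ := 2 * |Real.sin (x / 2)|

lemma dflS_nonneg (x : ℝ) : 0 ≤ dflS x := by unfold dflS; positivity

lemma dflS_continuous : Continuous dflS := by
  unfold dflS; fun_prop

lemma dflS_le_abs (x : ℝ) : dflS x ≤ |x| := by
  have h := Real.abs_sin_le_abs (x := x / 2)
  have : |x / 2| = |x| / 2 := by rw [abs_div]; norm_num
  unfold dflS; linarith

lemma dflS_le_two (x : ℝ) : dflS x ≤ 2 := by
  have h1 : |Real.sin (x / 2)| ≤ 1 :=
    abs_le.2 ⟨Real.neg_one_le_sin _, Real.sin_le_one _⟩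
  unfold dflS; linarith

lemma dfl_sqrt (x : ℝ) : Real.sqrt (2 - 2 * Real.cos x) = dflS x := by
  have h := Real.sin_sq_eq_half_sub (x / 2)
  have h2 : 2 * (x / 2) = x := by ring
  rw [h2] at h
  have h3 : 2 - 2 * Real.cos x = (2 * |Real.sin (x / 2)|) ^ 2 := by
    rw [mul_pow, sq_abs]; nlinarith
  rw [h3, Real.sqrt_sq (by positivity)]
  rfl

lemma dfl_abs (x : ℝ) : ‖1 - Complex.exp (-Complex.I * x)‖ = dflS x := by
  have h1 : (1 : ℂ) - Complex.exp (-Complex.I * x)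
      = Complex.ofReal (1 - Real.cos x) + Complex.ofReal (Real.sin x) * Complex.I := by
    rw [show -Complex.I * (x : ℂ) = ((-x : ℝ) : ℂ) * Complex.I by push_cast; ring,
      Complex.exp_mul_I, ← Complex.ofReal_cos, ← Complex.ofReal_sin]
    push_cast [Real.cos_neg, Real.sin_neg]
    ring
  rw [h1, Complex.norm_add_mul_I,
    show (1 - Real.cos x) ^ 2 + Real.sin x ^ 2 = 2 - 2 * Real.cos x by
      nlinarith [Real.sin_sq_add_cos_sq x]]
  exact dfl_sqrt x

lemma dfl_abs' (x : ℝ) : ‖Complex.exp (Complex.I * x) - 1‖ = dflS x := by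
  have h1 : Complex.exp (Complex.I * x) - 1
      = Complex.ofReal (Real.cos x - 1) + Complex.ofReal (Real.sin x) * Complex.I := by
    rw [show Complex.I * (x : ℂ) = ((x : ℝ) : ℂ) * Complex.I by push_cast; ring,
      Complex.exp_mul_I, ← Complex.ofReal_cos, ← Complex.ofReal_sin]
    push_cast
    ring
  rw [h1, Complex.norm_add_mul_I,
    show (Real.cos x - 1) ^ 2 + Real.sin x ^ 2 = 2 - 2 * Real.cos x by
      nlinarith [Real.sin_sq_add_cos_sq x]]
  exact dfl_sqrt x

lemma dfl_geom (n : ℕ) (z : ℂ) :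
    (∑ t ∈ Finset.Icc 1 n, z ^ t) * (z - 1) = z ^ (n + 1) - z := by
  induction n with
  | zero => simp
  | succ n ih =>
    rw [Finset.sum_Icc_succ_top (by omega)]
    ring_nf
    ring_nf at ih
    linear_combination ih

lemma dfl_key (n : ℕ) (x : ℝ) : Dsq n x * dflS x ^ 2 = dflS ((n : ℝ) * x) ^ 2 := by
  set z := Complex.exp (Complex.I * x) with hz
  have hsum : (∑ t ∈ Finset.Icc 1 n, Complex.exp (Complex.I * (t : ℂ) * (x : ℂ)))
      = ∑ t ∈ Finset.Icc 1 n, z ^ t := by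
    refine Finset.sum_congr rfl fun t _ => ?_
    rw [hz, ← Complex.exp_nat_mul]
    ring_nf
  have habs : ‖∑ t ∈ Finset.Icc 1 n, z ^ t‖ * dflS x = dflS ((n : ℝ) * x) := by
    have h := congrArg (‖·‖) (dfl_geom n z)
    rw [norm_mul] at h
    have h2 : ‖z - 1‖ = dflS x := dfl_abs' x
    have h3 : z ^ (n + 1) - z = z * (z ^ n - 1) := by ring
    have h4 : ‖z‖ = 1 := by
      rw [hz, show Complex.I * (x : ℂ) = ((x : ℝ) : ℂ) * Complex.I by ring]
      exact Complex.norm_exp_ofReal_mul_I x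
    have h5 : z ^ n - 1 = Complex.exp (Complex.I * (((n : ℝ) * x : ℝ) : ℂ)) - 1 := by
      rw [hz, ← Complex.exp_nat_mul]
      push_cast
      ring_nf
    rw [h2, h3, norm_mul, h4, one_mul, h5, dfl_abs'] at h
    exact h
  unfold Dsq
  rw [hsum, ← mul_pow, habs]

/-- Integrability of the dominating function. -/
lemma dfl_bound_integrable {r : ℝ} (h1 : -3 < r) (h2 : r < -1) :
    Integrable (fun u : ℝ => min (u ^ 2) 4 * |u| ^ r) := by
  set f : ℝ → ℝ := fun u => min (u ^ 2) 4 * |u| ^ r with hf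
  have hmeas : Measurable f := by
    apply Measurable.mul
    · exact (measurable_id.pow_const 2).min measurable_const
    · measurability
  have hnn : ∀ u, 0 ≤ f u := fun u =>
    mul_nonneg (le_min (sq_nonneg u) (by norm_num)) (Real.rpow_nonneg (abs_nonneg u) r)
  have heven : ∀ u, f (-u) = f u := by
    intro u; simp [hf, neg_pow, abs_neg]
  have hIoc : IntegrableOn f (Ioc 0 1) := by
    have hint : IntegrableOn (fun u : ℝ => u ^ (2 + r)) (Ioc 0 1) := by
      rw [← intervalIntegrable_iff_integrableOn_Ioc_of_le zero_le_one]
      exact intervalIntegral.intervalIntegrable_rpow' (by linarith)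
    refine hint.mono' hmeas.aestronglyMeasurable.restrict ?_
    refine (ae_restrict_iff' measurableSet_Ioc).2 (ae_of_all _ fun u hu => ?_)
    have hu0 : (0 : ℝ) < u := hu.1
    rw [Real.norm_of_nonneg (hnn u)]
    calc f u ≤ u ^ 2 * u ^ r := by
          rw [hf]; simp only
          rw [abs_of_pos hu0]
          exact mul_le_mul_of_nonneg_right (min_le_left _ _) (Real.rpow_nonneg hu0.le r)
      _ = u ^ (2 + r) := by
          rw [← Real.rpow_natCast u 2, ← Real.rpow_add hu0]; norm_num
  have hIoi : IntegrableOn f (Ioi 1) := by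
    have hint : IntegrableOn (fun u : ℝ => 4 * u ^ r) (Ioi 1) :=
      (integrableOn_Ioi_rpow_of_lt h2 one_pos).const_mul 4
    refine hint.mono' hmeas.aestronglyMeasurable.restrict ?_
    refine (ae_restrict_iff' measurableSet_Ioi).2 (ae_of_all _ fun u hu => ?_)
    have hu0 : (0 : ℝ) < u := lt_trans one_pos hu
    rw [Real.norm_of_nonneg (hnn u)]
    rw [hf]; simp only
    rw [abs_of_pos hu0]
    exact mul_le_mul_of_nonneg_right (min_le_right _ _) (Real.rpow_nonneg hu0.le r)
  have hpos : IntegrableOn f (Ioi 0) := by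
    rw [← Set.Ioc_union_Ioi_eq_Ioi zero_le_one]
    exact hIoc.union hIoi
  have hneg : IntegrableOn f (Iio 0) := by
    have h := (Measure.measurePreserving_neg (volume : Measure ℝ)).integrableOn_comp_preimage
      (Homeomorph.neg ℝ).measurableEmbedding (s := Ioi (0:ℝ)) (f := f)
    have h2 : IntegrableOn (f ∘ Neg.neg) (Neg.neg ⁻¹' Ioi (0:ℝ)) := h.2 hpos
    have h3 : (Neg.neg ⁻¹' Ioi (0:ℝ) : Set ℝ) = Iio 0 := by
      ext u; simp
    rw [h3] at h2
    exact h2.congr_fun (fun u _ => heven u) measurableSet_Iio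
  have h0 : IntegrableOn f {(0:ℝ)} := by
    simp [IntegrableOn, Measure.restrict_singleton]
  rw [← integrableOn_univ]
  have : (univ : Set ℝ) = Iio 0 ∪ ({0} ∪ Ioi 0) := by
    ext u
    simp only [mem_univ, mem_union, mem_Iio, mem_singleton_iff, mem_Ioi, true_iff]
    rcases lt_trichotomy u 0 with h | h | h <;> tauto
  rw [this]
  exact hneg.union (h0.union hpos)

lemma dfl_tendsto (u : ℝ) (hu : u ≠ 0) :
    Tendsto (fun n : ℕ => (n : ℝ) * dflS (u / n)) atTop (nhds |u|) := by
  have hslope : Tendsto (fun y : ℝ => Real.sin y / y) (nhdsWithin 0 {0}ᶜ) (nhds 1) := by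
    have h := Real.hasDerivAt_sin 0
    rw [hasDerivAt_iff_tendsto_slope] at h
    simpa [slope_fun_def_field, Real.cos_zero] using h
  have hh : Tendsto (fun n : ℕ => u / (2 * n)) atTop (nhdsWithin 0 {0}ᶜ) := by
    rw [tendsto_nhdsWithin_iff]
    constructor
    · apply tendsto_const_nhds.div_atTop
      exact Tendsto.const_mul_atTop two_pos tendsto_natCast_atTop_atTop
    · filter_upwards [eventually_ge_atTop 1] with n hn
      have hn0 : (0 : ℝ) < n := by exact_mod_cast hn
      simp only [mem_compl_iff, mem_singleton_iff]
      exact div_ne_zero hu (by positivity)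
  have hcomp : Tendsto (fun n : ℕ => Real.sin (u / (2 * n)) / (u / (2 * n))) atTop (nhds 1) :=
    hslope.comp hh
  have habs : Tendsto (fun n : ℕ => |u * (Real.sin (u / (2 * n)) / (u / (2 * n)))|)
      atTop (nhds |u|) := by
    have h2 := (hcomp.const_mul u).abs
    simpa using h2
  refine Tendsto.congr' ?_ habs
  filter_upwards [eventually_ge_atTop 1] with n hn
  have hn0 : (0 : ℝ) < n := by exact_mod_cast hn
  have h3 : u * (Real.sin (u / (2 * n)) / (u / (2 * n))) = 2 * n * Real.sin (u / (2 * n)) := by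
    field_simp
  have h4 : u / (n : ℝ) / 2 = u / (2 * n) := by
    rw [div_div]
    ring_nf
  rw [h3, abs_mul, abs_of_nonneg (by positivity : (0:ℝ) ≤ 2 * (n:ℝ))]
  unfold dflS
  rw [h4]
  ring

/-- The elementary limit used in the proof of Proposition 3.1 (`farimaLM`):
`n^{-1-2d} ∫_{-π}^{π} D_n²(x) |1-e^{-ix}|^{-2d} dx → ∫_ℝ |1-e^{-ix}|² |x|^{-2-2d} dx < ∞`
for `0 < d < 1/2`. -/
theorem dirichlet_fractional_limit (d : ℝ) (hd0 : 0 < d) (hd : d < 1 / 2) :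
    Tendsto (fun n : ℕ => (n : ℝ) ^ (-1 - 2 * d) *
        ∫ x in Set.Icc (-Real.pi) Real.pi,
          Dsq n x * ‖1 - Complex.exp (-Complex.I * (x : ℂ))‖ ^ (-(2 * d)))
      atTop
      (nhds (∫ x : ℝ,
        ‖1 - Complex.exp (-Complex.I * (x : ℂ))‖ ^ 2 * |x| ^ (-2 - 2 * d)))
    ∧ Integrable (fun x : ℝ =>
        ‖1 - Complex.exp (-Complex.I * (x : ℂ))‖ ^ 2 * |x| ^ (-2 - 2 * d)) := by
  have hπ := Real.pi_pos
  have h2π := Real.two_le_pi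
  simp only [dfl_abs]
  have h0 : ∀ᵐ x : ℝ, x ≠ 0 := by
    refine ae_iff.mpr ?_
    simpa [not_not, Set.setOf_eq_eq_singleton] using measure_singleton (0 : ℝ)
  -- the dominating function
  set C : ℝ := (Real.pi / 2) ^ (2 + 2 * d) with hC
  have hC1 : 1 ≤ C := Real.one_le_rpow (by linarith) (by linarith)
  have hC0 : 0 < C := lt_of_lt_of_le one_pos hC1
  set bound : ℝ → ℝ := fun u => C * (min (u ^ 2) 4 * |u| ^ (-2 - 2 * d)) with hbound
  have hbound_nonneg : ∀ u, 0 ≤ bound u := fun u =>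
    mul_nonneg hC0.le (mul_nonneg (le_min (sq_nonneg u) (by norm_num))
      (Real.rpow_nonneg (abs_nonneg u) _))
  have hbound_int : Integrable bound :=
    (dfl_bound_integrable (by linarith) (by linarith)).const_mul C
  -- the rescaled integrands
  set G : ℕ → ℝ → ℝ := fun n u =>
    (Icc (-((n : ℝ) * Real.pi)) ((n : ℝ) * Real.pi)).indicator
      (fun u => dflS u ^ 2 * ((n : ℝ) * dflS (u / n)) ^ (-2 - 2 * d)) u with hG
  have hGmeas : ∀ n : ℕ, AEStronglyMeasurable (G n) volume := by
    intro n
    refine (Measurable.indicator ?_ measurableSet_Icc).aestronglyMeasurable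
    have h1 : Measurable fun u : ℝ => dflS u ^ 2 := (dflS_continuous.pow 2).measurable
    have h2 : Measurable fun u : ℝ => (n : ℝ) * dflS (u / n) :=
      (continuous_const.mul (dflS_continuous.comp (continuous_id.div_const (n : ℝ)))).measurable
    exact h1.mul (h2.pow_const _)
  -- the bound
  have h_bound : ∀ n : ℕ, ∀ᵐ u : ℝ, ‖G n u‖ ≤ bound u := by
    intro n
    filter_upwards [h0] with u hu
    by_cases hmem : u ∈ Icc (-((n : ℝ) * Real.pi)) ((n : ℝ) * Real.pi)
    · have hn1 : 1 ≤ n := by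
        rcases Nat.eq_zero_or_pos n with h | h
        · exfalso; apply hu
          subst h
          simpa using le_antisymm (by simpa using hmem.2) (by simpa using hmem.1)
        · exact h
      have hnpos : (0 : ℝ) < n := by exact_mod_cast hn1
      have huabs : |u| ≤ (n : ℝ) * Real.pi := abs_le.2 ⟨by linarith [hmem.1], hmem.2⟩
      have h4 : u / (n : ℝ) / 2 = u / (2 * n) := by rw [div_div]; ring_nf
      have hsmall : |u / (2 * n)| ≤ Real.pi / 2 := by
        rw [abs_div, abs_of_nonneg (by positivity : (0:ℝ) ≤ 2 * (n:ℝ))]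
        rw [div_le_iff₀ (by positivity)]
        calc |u| ≤ (n : ℝ) * Real.pi := huabs
          _ = Real.pi / 2 * (2 * n) := by ring
      have hjordan := Real.mul_abs_le_abs_sin hsmall
      have hphi_low : 2 / Real.pi * |u| ≤ (n : ℝ) * dflS (u / n) := by
        unfold dflS
        rw [h4]
        have habsdiv : |u / (2 * n)| = |u| / (2 * n) := by
          rw [abs_div, abs_of_nonneg (by positivity : (0:ℝ) ≤ 2 * (n:ℝ))]
        rw [habsdiv] at hjordan
        have := mul_le_mul_of_nonneg_left hjordan (by positivity : (0:ℝ) ≤ 2 * n)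
        calc 2 / Real.pi * |u| = 2 * (n:ℝ) * (2 / Real.pi * (|u| / (2 * n))) := by
              field_simp
          _ ≤ 2 * (n:ℝ) * |Real.sin (u / (2 * n))| := this
          _ = (n : ℝ) * (2 * |Real.sin (u / (2 * n))|) := by ring
      have hlow_pos : (0 : ℝ) < 2 / Real.pi * |u| := by
        have : 0 < |u| := abs_pos.2 hu
        positivity
      have h8 : ((n : ℝ) * dflS (u / n)) ^ (-2 - 2 * d) ≤ (2 / Real.pi * |u|) ^ (-2 - 2 * d) :=
        Real.rpow_le_rpow_of_nonpos hlow_pos hphi_low (by linarith)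
      have h9 : (2 / Real.pi * |u|) ^ (-2 - 2 * d) = C * |u| ^ (-2 - 2 * d) := by
        rw [Real.mul_rpow (by positivity) (abs_nonneg u)]
        congr 1
        rw [show (2 / Real.pi) = (Real.pi / 2)⁻¹ by rw [inv_div],
          Real.inv_rpow (by positivity), ← Real.rpow_neg (by positivity), hC]
        congr 1
        ring
      have hS2 : dflS u ^ 2 ≤ min (u ^ 2) 4 := by
        refine le_min ?_ ?_
        · calc dflS u ^ 2 ≤ |u| ^ 2 := pow_le_pow_left₀ (dflS_nonneg u) (dflS_le_abs u) 2
            _ = u ^ 2 := sq_abs u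
        · nlinarith [dflS_nonneg u, dflS_le_two u]
      have hGval : G n u = dflS u ^ 2 * ((n : ℝ) * dflS (u / n)) ^ (-2 - 2 * d) := by
        simp only [hG]; rw [indicator_of_mem hmem]
      rw [hGval, Real.norm_of_nonneg (mul_nonneg (pow_nonneg (dflS_nonneg u) 2)
        (Real.rpow_nonneg (mul_nonneg hnpos.le (dflS_nonneg _)) _))]
      calc dflS u ^ 2 * ((n : ℝ) * dflS (u / n)) ^ (-2 - 2 * d)
          ≤ min (u ^ 2) 4 * (C * |u| ^ (-2 - 2 * d)) :=
            mul_le_mul hS2 (h8.trans_eq h9)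
              (Real.rpow_nonneg (mul_nonneg hnpos.le (dflS_nonneg _)) _)
              (le_min (sq_nonneg u) (by norm_num))
        _ = bound u := by rw [hbound]; ring
    · have : G n u = 0 := by simp only [hG]; rw [indicator_of_notMem hmem]
      rw [this, norm_zero]
      exact hbound_nonneg u
  -- pointwise convergence
  have h_lim : ∀ᵐ u : ℝ, Tendsto (fun n : ℕ => G n u) atTop
      (nhds (dflS u ^ 2 * |u| ^ (-2 - 2 * d))) := by
    filter_upwards [h0] with u hu
    have hphi := dfl_tendsto u hu
    have h2 : Tendsto (fun n : ℕ => dflS u ^ 2 * ((n : ℝ) * dflS (u / n)) ^ (-2 - 2 * d))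
        atTop (nhds (dflS u ^ 2 * |u| ^ (-2 - 2 * d))) :=
      (hphi.rpow_const (Or.inl (abs_ne_zero.2 hu))).const_mul _
    refine Tendsto.congr' ?_ h2
    obtain ⟨N, hN⟩ := exists_nat_ge (|u| / Real.pi)
    filter_upwards [eventually_ge_atTop N] with n hn
    have hmem : u ∈ Icc (-((n : ℝ) * Real.pi)) ((n : ℝ) * Real.pi) := by
      have hNn : (N : ℝ) ≤ n := by exact_mod_cast hn
      have : |u| ≤ (n : ℝ) * Real.pi := by
        rw [div_le_iff₀ hπ] at hN
        calc |u| ≤ (N : ℝ) * Real.pi := hN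
          _ ≤ (n : ℝ) * Real.pi := by nlinarith
      exact ⟨by linarith [neg_abs_le u, abs_le.1 this], (le_abs_self u).trans this⟩
    simp only [hG]
    rw [indicator_of_mem hmem]
  have hDCT := tendsto_integral_of_dominated_convergence bound hGmeas hbound_int h_bound h_lim
  constructor
  · -- rewrite A n as ∫ G n for n ≥ 1
    refine Tendsto.congr' ?_ hDCT
    filter_upwards [eventually_ge_atTop 1] with n hn
    have hnpos : (0 : ℝ) < n := by exact_mod_cast hn
    -- step a : congruence of the set integral
    have ha : (∫ x in Set.Icc (-Real.pi) Real.pi, Dsq n x * dflS x ^ (-(2 * d)))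
        = ∫ x in Set.Icc (-Real.pi) Real.pi, dflS ((n : ℝ) * x) ^ 2 * dflS x ^ (-2 - 2 * d) := by
      refine setIntegral_congr_ae measurableSet_Icc ?_
      filter_upwards [h0] with x hx hxmem
      have hsin : Real.sin (x / 2) ≠ 0 := by
        intro h
        have hx1 : -Real.pi < x / 2 := by nlinarith [hxmem.1]
        have hx2 : x / 2 < Real.pi := by nlinarith [hxmem.2]
        rw [Real.sin_eq_zero_iff_of_lt_of_lt hx1 hx2] at h
        exact hx (by linarith)
      have hSpos : 0 < dflS x := by
        unfold dflS
        have := abs_pos.2 hsin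
        positivity
      have hSne : dflS x ^ 2 ≠ 0 := pow_ne_zero 2 hSpos.ne'
      have hsplit : dflS x ^ (-2 - 2 * d) = (dflS x ^ 2)⁻¹ * dflS x ^ (-(2 * d)) := by
        rw [show (-2 - 2 * d) = (-2 : ℝ) + (-(2 * d)) by ring, Real.rpow_add hSpos]
        congr 1
        rw [show (-2 : ℝ) = -(2:ℕ) by norm_num, Real.rpow_neg hSpos.le, Real.rpow_natCast]
      rw [hsplit, ← dfl_key n x]
      field_simp
    -- step b+c : indicator + scaling
    have hb : (∫ x in Set.Icc (-Real.pi) Real.pi,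
          dflS ((n : ℝ) * x) ^ 2 * dflS x ^ (-2 - 2 * d))
        = ∫ x : ℝ, (Set.Icc (-Real.pi) Real.pi).indicator
            (fun x => dflS ((n : ℝ) * x) ^ 2 * dflS x ^ (-2 - 2 * d)) x :=
      (integral_indicator measurableSet_Icc).symm
    set fn : ℝ → ℝ := (Set.Icc (-Real.pi) Real.pi).indicator
        (fun x => dflS ((n : ℝ) * x) ^ 2 * dflS x ^ (-2 - 2 * d)) with hfn
    have hc : (∫ x : ℝ, fn (x / (n : ℝ))) = |(n : ℝ)| • ∫ y : ℝ, fn y :=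
      Measure.integral_comp_div fn (n : ℝ)
    have hc' : (∫ y : ℝ, fn y) = (n : ℝ)⁻¹ * ∫ x : ℝ, fn (x / (n : ℝ)) := by
      rw [hc, abs_of_pos hnpos, smul_eq_mul, ← mul_assoc, inv_mul_cancel₀ hnpos.ne', one_mul]
    -- step d : identify with G n
    have hd2 : ∀ u : ℝ, (n : ℝ) ^ (-2 - 2 * d) * fn (u / (n : ℝ)) = G n u := by
      intro u
      simp only [hG, hfn]
      by_cases hmem : u ∈ Icc (-((n : ℝ) * Real.pi)) ((n : ℝ) * Real.pi)
      · have hmem' : u / (n : ℝ) ∈ Icc (-Real.pi) Real.pi := by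
          constructor
          · rw [le_div_iff₀ hnpos]
            calc -Real.pi * n = -((n:ℝ) * Real.pi) := by ring
              _ ≤ u := hmem.1
          · rw [div_le_iff₀ hnpos]
            calc u ≤ (n : ℝ) * Real.pi := hmem.2
              _ = Real.pi * n := by ring
        rw [indicator_of_mem hmem', indicator_of_mem hmem]
        rw [show (n : ℝ) * (u / n) = u by field_simp,
          Real.mul_rpow hnpos.le (dflS_nonneg _)]
        ring
      · have hmem' : u / (n : ℝ) ∉ Icc (-Real.pi) Real.pi := by
          intro hmem'
          apply hmem
          constructor
          · have := hmem'.1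
            rw [le_div_iff₀ hnpos] at this
            nlinarith
          · have := hmem'.2
            rw [div_le_iff₀ hnpos] at this
            nlinarith
        rw [indicator_of_notMem hmem', indicator_of_notMem hmem, mul_zero]
    have hexp : (n : ℝ) ^ (-1 - 2 * d) * (n : ℝ)⁻¹ = (n : ℝ) ^ (-2 - 2 * d) := by
      rw [← Real.rpow_neg_one (n : ℝ), ← Real.rpow_add hnpos]
      congr 1
      ring
    symm
    calc (n : ℝ) ^ (-1 - 2 * d) * ∫ x in Set.Icc (-Real.pi) Real.pi,
          Dsq n x * dflS x ^ (-(2 * d))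
        = (n : ℝ) ^ (-1 - 2 * d) * ((n : ℝ)⁻¹ * ∫ x : ℝ, fn (x / (n : ℝ))) := by
          rw [ha, hb, hc']
      _ = (n : ℝ) ^ (-2 - 2 * d) * ∫ x : ℝ, fn (x / (n : ℝ)) := by rw [← mul_assoc, hexp]
      _ = ∫ x : ℝ, (n : ℝ) ^ (-2 - 2 * d) * fn (x / (n : ℝ)) := (integral_const_mul _ _).symm
      _ = ∫ x : ℝ, G n x := integral_congr_ae (Eventually.of_forall hd2)
  · -- integrability of the limit
    have hmeas : AEStronglyMeasurable (fun u : ℝ => dflS u ^ 2 * |u| ^ (-2 - 2 * d)) volume := by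
      have h1 : Measurable fun u : ℝ => dflS u ^ 2 := (dflS_continuous.pow 2).measurable
      exact (h1.mul (measurable_abs.pow_const _)).aestronglyMeasurable
    refine hbound_int.mono' hmeas ?_
    filter_upwards with u
    rw [Real.norm_of_nonneg (mul_nonneg (pow_nonneg (dflS_nonneg u) 2)
      (Real.rpow_nonneg (abs_nonneg u) _))]
    have hS2 : dflS u ^ 2 ≤ min (u ^ 2) 4 := by
      refine le_min ?_ ?_
      · calc dflS u ^ 2 ≤ |u| ^ 2 := pow_le_pow_left₀ (dflS_nonneg u) (dflS_le_abs u) 2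
          _ = u ^ 2 := sq_abs u
      · nlinarith [dflS_nonneg u, dflS_le_two u]
    calc dflS u ^ 2 * |u| ^ (-2 - 2 * d)
        ≤ min (u ^ 2) 4 * |u| ^ (-2 - 2 * d) :=
          mul_le_mul_of_nonneg_right hS2 (Real.rpow_nonneg (abs_nonneg u) _)
      _ ≤ bound u := by
          rw [hbound]
          exact le_mul_of_one_le_left (mul_nonneg (le_min (sq_nonneg u) (by norm_num))
            (Real.rpow_nonneg (abs_nonneg u) _)) hC1
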